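/- The subgroup Γ₀(2) of SL₂(ℤ) consisting of matrices [[a,b],[c,d]] with c ≡ 0 (mod 2) is generated by T = [[1,1],[0,1]] and S T² S T, where S = [[0,-1],[1,0]]. -/

import Mathlib

open ModularGroup CongruenceSubgroup Matrix

namespace Gamma0TwoAux

local notation "SL2" => Matrix.SpecialLinearGroup (Fin 2) ℤ

lemma entry_mul (A B : Matrix (Fin 2) (Fin 2) ℤ) (i j : Fin 2) :
    (A * B) i j = A i 0 * B 0 j + A i 1 * B 1 j := by
  simp [Matrix.mul_apply, Fin.sum_univ_two]

def Lm : SL2 := ⟨!![1, 0; 2, 1], by norm_num [Matrix.det_fin_two_of]⟩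

lemma coe_Lm : (Lm : Matrix (Fin 2) (Fin 2) ℤ) = !![1, 0; 2, 1] := rfl

lemma coe_Lm_inv : ((Lm⁻¹ : SL2) : Matrix (Fin 2) (Fin 2) ℤ) = !![1, 0; -2, 1] := by
  simp [Matrix.SpecialLinearGroup.coe_inv, coe_Lm, Matrix.adjugate_fin_two]

lemma coe_Lm_zpow (m : ℤ) :
    ((Lm ^ m : SL2) : Matrix (Fin 2) (Fin 2) ℤ) = !![1, 0; 2 * m, 1] := by
  induction' m using Int.induction_on with n h n h
  · rw [zpow_zero, Matrix.SpecialLinearGroup.coe_one, Matrix.one_fin_two]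
    norm_num
  · rw [_root_.zpow_add, zpow_one, Matrix.SpecialLinearGroup.coe_mul, h, coe_Lm,
      Matrix.mul_fin_two]
    congrm !![?_, ?_; ?_, ?_] <;> push_cast <;> ring
  · rw [_root_.zpow_sub, zpow_one, Matrix.SpecialLinearGroup.coe_mul, h, coe_Lm_inv,
      Matrix.mul_fin_two]
    congrm !![?_, ?_; ?_, ?_] <;> push_cast <;> ring

lemma coe_U : ((S * T ^ 2 * S * T : SL2) : Matrix (Fin 2) (Fin 2) ℤ) = !![-1, -1; 2, 1] := by
  simp only [Matrix.SpecialLinearGroup.coe_mul, Matrix.SpecialLinearGroup.coe_pow, coe_S, coe_T,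
    pow_two, Matrix.mul_fin_two]
  norm_num

lemma TU_eq_Lm : T * (S * T ^ 2 * S * T) = Lm := by
  apply Subtype.ext
  rw [Matrix.SpecialLinearGroup.coe_mul, coe_U, coe_T, coe_Lm, Matrix.mul_fin_two]
  norm_num

lemma U_sq : (S * T ^ 2 * S * T : SL2) ^ 2 = -1 := by
  apply Subtype.ext
  rw [Matrix.SpecialLinearGroup.coe_pow, coe_U, pow_two, Matrix.mul_fin_two,
    Matrix.SpecialLinearGroup.coe_neg, Matrix.SpecialLinearGroup.coe_one, Matrix.one_fin_two]
  ext i j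
  fin_cases i <;> fin_cases j <;> simp

abbrev Hgen : Set SL2 := {ModularGroup.T, ModularGroup.S * ModularGroup.T ^ 2 *
    ModularGroup.S * ModularGroup.T}

lemma T_mem : ModularGroup.T ∈ Subgroup.closure Hgen :=
  Subgroup.subset_closure (Set.mem_insert _ _)

lemma U_mem : (S * T ^ 2 * S * T : SL2) ∈ Subgroup.closure Hgen :=
  Subgroup.subset_closure (Set.mem_insert_of_mem _ rfl)

lemma Lm_mem : Lm ∈ Subgroup.closure Hgen := by
  rw [← TU_eq_Lm]; exact mul_mem T_mem U_mem

lemma neg_mem {g : SL2} (hg : g ∈ Subgroup.closure Hgen) : -g ∈ Subgroup.closure Hgen := by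
  have h : -g = (S * T ^ 2 * S * T : SL2) ^ 2 * g := by rw [U_sq, neg_one_mul]
  rw [h]
  exact mul_mem (pow_mem U_mem 2) hg

lemma emod_bounds (a : ℤ) {c : ℤ} (hc : c ≠ 0) : 0 ≤ a % c ∧ a % c < |c| := by
  rcases hc.lt_or_gt with h | h
  · have h2 := Int.emod_lt_of_pos a (neg_pos.2 h)
    rw [Int.emod_neg] at h2
    exact ⟨Int.emod_nonneg a hc, by rwa [abs_of_neg h]⟩
  · exact ⟨Int.emod_nonneg a hc, by rw [abs_of_pos h]; exact Int.emod_lt_of_pos a h⟩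

lemma key : ∀ (n : ℕ) (g : SL2), ((g : Matrix (Fin 2) (Fin 2) ℤ) 1 0).natAbs = n →
    (2 : ℤ) ∣ (g : Matrix (Fin 2) (Fin 2) ℤ) 1 0 → g ∈ Subgroup.closure Hgen := by
  intro n
  induction n using Nat.strong_induction_on with
  | _ n ih =>
  intro g hn hc
  have hdet : (g : Matrix (Fin 2) (Fin 2) ℤ) 0 0 * (g : Matrix (Fin 2) (Fin 2) ℤ) 1 1 -
      (g : Matrix (Fin 2) (Fin 2) ℤ) 0 1 * (g : Matrix (Fin 2) (Fin 2) ℤ) 1 0 = 1 := by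
    have h := g.2
    rwa [Matrix.det_fin_two] at h
  obtain ⟨k, hk⟩ := hc
  rcases eq_or_ne ((g : Matrix (Fin 2) (Fin 2) ℤ) 1 0) 0 with h0 | h0
  · rw [h0, mul_zero, sub_zero] at hdet
    rcases Int.eq_one_or_neg_one_of_mul_eq_one' hdet with ⟨h1, h2⟩ | ⟨h1, h2⟩
    · have hg : g = T ^ ((g : Matrix (Fin 2) (Fin 2) ℤ) 0 1) := by
        apply Subtype.ext
        rw [coe_T_zpow]
        ext i j
        fin_cases i <;> fin_cases j <;> simp [h0, h1, h2]
      rw [hg]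
      exact zpow_mem T_mem _
    · have hg : g = -(T ^ (-((g : Matrix (Fin 2) (Fin 2) ℤ) 0 1))) := by
        apply Subtype.ext
        rw [Matrix.SpecialLinearGroup.coe_neg, coe_T_zpow]
        ext i j
        fin_cases i <;> fin_cases j <;> simp [h0, h1, h2]
      rw [hg]
      exact neg_mem (zpow_mem T_mem _)
  · -- c ≠ 0 : Euclidean step
    set a := (g : Matrix (Fin 2) (Fin 2) ℤ) 0 0 with ha_def
    set c := (g : Matrix (Fin 2) (Fin 2) ℤ) 1 0 with hc_def
    set q := a / c with hq_def
    set r := a % c with hr_def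
    obtain ⟨hr0, hrlt⟩ := emod_bounds a h0
    have hr_eq : r = a - c * q := Int.emod_def a c
    -- a is odd
    have hodd : ¬ (2 : ℤ) ∣ a := by
      rintro ⟨l, hl⟩
      have h1 : (2 : ℤ) ∣ 1 :=
        ⟨l * (g : Matrix (Fin 2) (Fin 2) ℤ) 1 1 - (g : Matrix (Fin 2) (Fin 2) ℤ) 0 1 * k, by
          linear_combination (g : Matrix (Fin 2) (Fin 2) ℤ) 1 1 * hl -
            (g : Matrix (Fin 2) (Fin 2) ℤ) 0 1 * hk - hdet⟩
      norm_num at h1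
    have hrodd : ¬ (2 : ℤ) ∣ r := by
      rintro ⟨l, hl⟩
      apply hodd
      exact ⟨l + k * q, by rw [hr_eq] at hl; linear_combination hl + q * hk⟩
    have hrpos : 0 < r := by
      rcases hr0.lt_or_eq with h | h
      · exact h
      · exact absurd ⟨0, h.symm.trans (mul_zero 2).symm⟩ hrodd
    -- entries of T^(-q) * g
    have e00 : ((T ^ (-q) * g : SL2) : Matrix (Fin 2) (Fin 2) ℤ) 0 0 = r := by
      rw [Matrix.SpecialLinearGroup.coe_mul, coe_T_zpow, entry_mul, hr_eq]
      simp
      ring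
    have e10 : ((T ^ (-q) * g : SL2) : Matrix (Fin 2) (Fin 2) ℤ) 1 0 = c := by
      rw [Matrix.SpecialLinearGroup.coe_mul, coe_T_zpow, entry_mul]
      simp
      rfl
    -- second division
    have h2r : (2 : ℤ) * r ≠ 0 := by positivity
    set q2 := c / (2 * r) with hq2_def
    set r2 := c % (2 * r) with hr2_def
    obtain ⟨hs0, hslt⟩ := emod_bounds c h2r
    rw [abs_of_pos (by positivity : (0:ℤ) < 2 * r)] at hslt
    have hr2_eq : r2 = c - 2 * r * q2 := Int.emod_def c (2 * r)
    have hr2even : (2 : ℤ) ∣ r2 := ⟨k - r * q2, by rw [hr2_eq, hk]; ring⟩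
    have hr2ne : r2 ≠ r := by
      intro h
      exact hrodd (h ▸ hr2even)
    have habs : r < |c| := hrlt
    rw [Int.abs_eq_natAbs, hn] at habs
    -- the general step for a chosen power m of Lm
    have step : ∀ m : ℤ,
        ((Lm ^ m * (T ^ (-q) * g) : SL2) : Matrix (Fin 2) (Fin 2) ℤ) 1 0 = 2 * m * r + c := by
      intro m
      rw [Matrix.SpecialLinearGroup.coe_mul, coe_Lm_zpow, entry_mul, e00, e10]
      simp
    have main : ∀ m : ℤ, (2 * m * r + c).natAbs < n → (2:ℤ) ∣ (2 * m * r + c) →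
        g ∈ Subgroup.closure Hgen := by
      intro m hlt hdvd
      have hmem : Lm ^ m * (T ^ (-q) * g) ∈ Subgroup.closure Hgen := by
        apply ih _ (by rw [step m]; exact hlt) _ rfl
        rw [step m]; exact hdvd
      have hgid : g = T ^ q * (Lm ^ (-m) * (Lm ^ m * (T ^ (-q) * g))) := by
        group
      rw [hgid]
      exact mul_mem (zpow_mem T_mem _) (mul_mem (zpow_mem Lm_mem _) hmem)
    rw [← hr2_def] at hs0 hslt
    clear_value q r q2 r2
    rcases lt_or_gt_of_ne hr2ne with hcase | hcase
    · -- r2 < r : take m = -q2, new entry r2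
      apply main (-q2)
      · have hval : 2 * (-q2) * r + c = r2 := by rw [hr2_eq]; ring
        rw [hval]; omega
      · have hval : 2 * (-q2) * r + c = r2 := by rw [hr2_eq]; ring
        rw [hval]; exact hr2even
    · -- r < r2 : take m = -q2 - 1, new entry r2 - 2r
      apply main (-q2 - 1)
      · have hval : 2 * (-q2 - 1) * r + c = r2 - 2 * r := by rw [hr2_eq]; ring
        rw [hval]; omega
      · have hval : 2 * (-q2 - 1) * r + c = r2 - 2 * r := by rw [hr2_eq]; ring
        rw [hval]
        exact dvd_sub hr2even ⟨r, by ring⟩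
    
end Gamma0TwoAux

/-- `Γ₀(2) = {[[a,b],[c,d]] ∈ SL₂(ℤ) : c ≡ 0 mod 2}` is generated by
`T = [[1,1],[0,1]]` and `S T² S T`, where `S = [[0,-1],[1,0]]`. -/
theorem Gamma0_two_generators :
    Subgroup.closure ({ModularGroup.T, ModularGroup.S * ModularGroup.T ^ 2 *
        ModularGroup.S * ModularGroup.T} : Set (Matrix.SpecialLinearGroup (Fin 2) ℤ)) =
      CongruenceSubgroup.Gamma0 2 := by
  apply le_antisymm
  · rw [Subgroup.closure_le]
    rintro x (rfl | rfl) <;>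
      rw [SetLike.mem_coe, Gamma0_mem, ZMod.intCast_zmod_eq_zero_iff_dvd]
    · exact ⟨0, by norm_num [ModularGroup.coe_T]⟩
    · exact ⟨1, by rw [show ((ModularGroup.S * ModularGroup.T ^ 2 * ModularGroup.S *
        ModularGroup.T : Matrix.SpecialLinearGroup (Fin 2) ℤ) : Matrix (Fin 2) (Fin 2) ℤ) 1 0 = 2
          from by rw [Gamma0TwoAux.coe_U]; norm_num]; norm_num⟩
  · intro g hg
    rw [Gamma0_mem, ZMod.intCast_zmod_eq_zero_iff_dvd] at hg
    exact Gamma0TwoAux.key _ g rfl hg
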